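/- Let G be a finite connected simple graph with n vertices and m edges, W a complex weighted matrix of G, B_w the weighted arc matrix, J₀ the arc-inversion matrix, and D_w the weighted degree matrix. Then for every t ∈ ℂ, det(I_{2m} − t·(ᵀB_w − J₀)) = (1 − t²)^{m−n} · det(I_n − t·ᵀW + t²·(D_w − I_n)), where ᵀM denotes the transpose of M. -/

import Mathlib

noncomputable section

open Finset Matrix

variable {V : Type*}

/-- The weighted arc matrix B_w: `(B_w) e f = w(f) = W_{o(f) t(f)}` if `t(e) = o(f)`, else 0. -/
def weightedArcMatrix [Fintype V] [DecidableEq V] (G : SimpleGraph V) [DecidableRel G.Adj]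
    (W : Matrix V V ℂ) : Matrix G.Dart G.Dart ℂ := fun e f =>
  if e.toProd.2 = f.toProd.1 then W f.toProd.1 f.toProd.2 else 0

/-- The arc-inversion matrix J₀. -/
def arcInvMatrix [Fintype V] [DecidableEq V] (G : SimpleGraph V) [DecidableRel G.Adj] :
    Matrix G.Dart G.Dart ℂ := fun e f =>
  if f = e.symm then 1 else 0

/-- The weighted degree matrix D_w: diagonal, with `(D_w)_{uu} = Σ_{e : o(e) = u} w(e)`. -/
def weightedDegMatrix [Fintype V] [DecidableEq V] (G : SimpleGraph V) [DecidableRel G.Adj]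
    (W : Matrix V V ℂ) : Matrix V V ℂ :=
  Matrix.diagonal fun u =>
    ∑ e : G.Dart, if e.toProd.1 = u then W e.toProd.1 e.toProd.2 else 0

section Aux

variable [Fintype V] [DecidableEq V] (G : SimpleGraph V) [DecidableRel G.Adj] (W : Matrix V V ℂ)

def startMat : Matrix V G.Dart ℂ := fun u e => if e.toProd.1 = u then 1 else 0

def endMat : Matrix V G.Dart ℂ := fun u e => if e.toProd.2 = u then 1 else 0

def wStartMat : Matrix G.Dart V ℂ := fun e u => if e.toProd.1 = u then W e.toProd.1 e.toProd.2 else 0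

lemma arcT_eq : (weightedArcMatrix G W)ᵀ = wStartMat G W * endMat G := by
  ext e f
  simp only [transpose_apply, weightedArcMatrix, mul_apply, wStartMat, endMat,
    ite_mul, one_mul, zero_mul, mul_ite, mul_one, mul_zero]
  rw [Finset.sum_eq_single e.toProd.1]
  · simp [eq_comm]
  · intro u _ hu
    simp [Ne.symm hu]
  · simp

lemma endMat_mul_wStartMat (hW : ∀ u v : V, ¬G.Adj u v → W u v = 0) :
    endMat G * wStartMat G W = Wᵀ := by
  ext u v
  simp only [mul_apply, endMat, wStartMat, transpose_apply, ite_mul, one_mul, zero_mul]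
  by_cases h : G.Adj v u
  · rw [Finset.sum_eq_single (SimpleGraph.Dart.mk (v, u) h)]
    · simp
    · intro e _ he
      by_cases h1 : e.toProd.2 = u
      · by_cases h2 : e.toProd.1 = v
        · exact absurd (SimpleGraph.Dart.ext _ _ (Prod.ext h2 h1)) he
        · simp [h1, h2]
      · simp [h1]
    · simp
  · rw [hW v u h, Finset.sum_eq_zero]
    intro e _
    by_cases h1 : e.toProd.2 = u
    · by_cases h2 : e.toProd.1 = v
      · exact absurd (h2 ▸ h1 ▸ e.adj) h
      · simp [h1, h2]
    · simp [h1]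

lemma startMat_mul_wStartMat : startMat G * wStartMat G W = weightedDegMatrix G W := by
  ext u v
  simp only [mul_apply, startMat, wStartMat, weightedDegMatrix, diagonal, of_apply, ite_mul,
    one_mul, zero_mul]
  by_cases h : u = v
  · subst h
    rw [if_pos rfl]
    apply Finset.sum_congr rfl
    intro e _
    split <;> simp_all
  · simp only [h, if_false]
    rw [Finset.sum_eq_zero]
    intro e _
    by_cases h1 : e.toProd.1 = u
    · simp [h1, h]
    · simp [h1]

lemma endMat_mul_arcInv : endMat G * arcInvMatrix G = startMat G := by
  ext u f
  simp only [mul_apply, endMat, arcInvMatrix, startMat, ite_mul, one_mul, zero_mul, mul_ite,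
    mul_one, mul_zero]
  rw [Finset.sum_eq_single f.symm]
  · simp [SimpleGraph.Dart.symm_symm, SimpleGraph.Dart.symm]
    split_ifs <;> simp_all
  · intro e _ he
    have : f ≠ e.symm := fun hf => he (by rw [hf, SimpleGraph.Dart.symm_symm])
    simp [this]
  · simp

lemma arcInv_mul_arcInv : arcInvMatrix G * arcInvMatrix G = 1 := by
  ext e g
  simp only [mul_apply, arcInvMatrix, ite_mul, one_mul, zero_mul, mul_ite, mul_one, mul_zero]
  rw [Finset.sum_eq_single e.symm]
  · rw [if_pos rfl, Matrix.one_apply]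
    simp [SimpleGraph.Dart.symm_symm, eq_comm]
  · intro f _ hf
    simp [hf]
  · simp

end Aux

section DetJ

variable [Fintype V] [DecidableEq V] (G : SimpleGraph V) [DecidableRel G.Adj]

lemma det_one_sub_smul_arcInv (t : ℂ) :
    ((1 : Matrix G.Dart G.Dart ℂ) - t • arcInvMatrix G).det =
      (1 - t ^ 2) ^ G.edgeFinset.card := by
  classical
  set σ := Fintype.equivFin V with hσ
  set P : G.Dart → Prop := fun d => σ d.toProd.1 < σ d.toProd.2 with hPdef
  have hswap : ∀ d : G.Dart, d.symm.toProd = d.toProd.swap := fun d => rfl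
  have hP : ∀ d : G.Dart, P d ↔ ¬ P d.symm := by
    intro d
    have hne : σ d.toProd.1 ≠ σ d.toProd.2 := fun h => d.adj.ne (σ.injective h)
    have hne' : (σ d.toProd.1 : ℕ) ≠ (σ d.toProd.2 : ℕ) := fun h => hne (Fin.ext h)
    simp only [hPdef, hswap, Prod.fst_swap, Prod.snd_swap]
    rw [Fin.lt_def, Fin.lt_def, not_lt]
    omega
  haveI : DecidablePred P := Classical.decPred P
  set O := {d : G.Dart // P d} with hO
  have hPsymm : ∀ d : G.Dart, ¬ P d → P d.symm := by
    intro d hd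
    by_contra h
    exact hd ((hP d).mpr h)
  let ψ : O ⊕ O ≃ G.Dart :=
  { toFun := Sum.elim (fun a => a.1) (fun a => a.1.symm)
    invFun := fun d => if h : P d then Sum.inl ⟨d, h⟩ else Sum.inr ⟨d.symm, hPsymm d h⟩
    left_inv := by
      rintro (a | a)
      · simp [dif_pos a.2]
      · have h1 : ¬ P a.1.symm := (hP a.1).mp a.2
        simp only [Sum.elim_inr, dif_neg h1]
        simp [Subtype.ext_iff, SimpleGraph.Dart.symm_symm]
        exact h1
    right_inv := by
      intro d
      by_cases h : P d
      · simp [dif_pos h]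
      · simp [dif_neg h, SimpleGraph.Dart.symm_symm] }
  have hcard : Fintype.card O = G.edgeFinset.card := by
    have h1 : Fintype.card (O ⊕ O) = Fintype.card G.Dart := Fintype.card_congr ψ
    rw [Fintype.card_sum, SimpleGraph.dart_card_eq_twice_card_edges] at h1
    omega
  have hnotsymm : ∀ a b : O, a.1.symm ≠ b.1 := by
    intro a b h
    exact ((hP a.1).mp a.2) (h ▸ b.2)
  have hψl : ∀ a : O, ψ (Sum.inl a) = a.1 := fun a => rfl
  have hψr : ∀ a : O, ψ (Sum.inr a) = a.1.symm := fun a => rfl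
  have hsymminj : Function.Injective (SimpleGraph.Dart.symm : G.Dart → G.Dart) :=
    (SimpleGraph.Dart.symm_involutive (G := G)).injective
  have hblock : ((1 : Matrix G.Dart G.Dart ℂ) - t • arcInvMatrix G).submatrix ψ ψ =
      Matrix.fromBlocks 1 (-t • 1) (-t • 1) 1 := by
    ext x y
    cases x with
    | inl a =>
      cases y with
      | inl b =>
        rw [submatrix_apply, hψl, hψl, fromBlocks_apply₁₁]
        simp only [Matrix.sub_apply, Matrix.smul_apply, Matrix.one_apply, arcInvMatrix,
          smul_eq_mul]
        rw [if_neg (show ¬((b : G.Dart) = (↑a : G.Dart).symm) from fun h => hnotsymm a b h.symm)]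
        simp [Subtype.coe_inj]
      | inr b =>
        rw [submatrix_apply, hψl, hψr, fromBlocks_apply₁₂]
        simp only [Matrix.sub_apply, Matrix.smul_apply, Matrix.one_apply, arcInvMatrix,
          smul_eq_mul, Matrix.neg_apply]
        have h1 : ¬((↑a : G.Dart) = (↑b : G.Dart).symm) :=
          fun h => hnotsymm b a h.symm
        rw [if_neg h1]
        have h2 : ((↑b : G.Dart).symm = (↑a : G.Dart).symm) ↔ a = b := by
          rw [hsymminj.eq_iff, Subtype.coe_inj]; exact eq_comm
        by_cases h : a = b
        · rw [if_pos (h2.mpr h), if_pos h]; ring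
        · rw [if_neg (fun hh => h (h2.mp hh)), if_neg h]; ring
    | inr a =>
      cases y with
      | inl b =>
        rw [submatrix_apply, hψr, hψl, fromBlocks_apply₂₁]
        simp only [Matrix.sub_apply, Matrix.smul_apply, Matrix.one_apply, arcInvMatrix,
          smul_eq_mul, Matrix.neg_apply]
        rw [if_neg (hnotsymm a b)]
        have h2 : ((↑b : G.Dart) = (↑a : G.Dart).symm.symm) ↔ a = b := by
          rw [SimpleGraph.Dart.symm_symm, Subtype.coe_inj]; exact eq_comm
        by_cases h : a = b
        · rw [if_pos (h2.mpr h), if_pos h]; ring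
        · rw [if_neg (fun hh => h (h2.mp hh)), if_neg h]; ring
      | inr b =>
        rw [submatrix_apply, hψr, hψr, fromBlocks_apply₂₂]
        simp only [Matrix.sub_apply, Matrix.smul_apply, Matrix.one_apply, arcInvMatrix,
          smul_eq_mul]
        have h1 : ((↑a : G.Dart).symm = (↑b : G.Dart).symm) ↔ a = b := by
          rw [hsymminj.eq_iff, Subtype.coe_inj]
        have h2 : ¬((↑b : G.Dart).symm = (↑a : G.Dart).symm.symm) := by
          rw [SimpleGraph.Dart.symm_symm]
          exact fun h => hnotsymm b a h
        rw [if_neg h2]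
        by_cases h : a = b
        · rw [if_pos (h1.mpr h), if_pos h]; ring
        · rw [if_neg (fun hh => h (h1.mp hh)), if_neg h]; ring
  rw [← Matrix.det_submatrix_equiv_self ψ, hblock, Matrix.det_fromBlocks_one₁₁]
  have : (1 : Matrix O O ℂ) - (-t • 1) * (-t • 1) = (1 - t ^ 2) • (1 : Matrix O O ℂ) := by
    rw [Matrix.smul_mul, Matrix.mul_smul, Matrix.mul_one]
    rw [smul_smul]
    rw [sub_smul, one_smul]
    ring_nf
  rw [this, Matrix.det_smul, Matrix.det_one, mul_one, hcard]

end DetJ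

section Core

variable [Fintype V] [DecidableEq V] (G : SimpleGraph V) [DecidableRel G.Adj] (W : Matrix V V ℂ)

lemma core_identity (hW : ∀ u v : V, ¬G.Adj u v → W u v = 0) (t : ℂ) (ht : 1 - t ^ 2 ≠ 0) :
    (1 - t ^ 2) ^ (Fintype.card V) *
        ((1 : Matrix G.Dart G.Dart ℂ) - t • ((weightedArcMatrix G W)ᵀ - arcInvMatrix G)).det =
      (1 - t ^ 2) ^ G.edgeFinset.card *
        ((1 : Matrix V V ℂ) - t • Wᵀ + t ^ 2 • (weightedDegMatrix G W - 1)).det := by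
  classical
  set mm := G.edgeFinset.card with hmm
  set nn := Fintype.card V with hnn
  set a := 1 - t ^ 2 with ha
  set Cm := wStartMat G W with hCm
  set Tm := endMat G with hTm
  set Sm := startMat G with hSm
  set J := arcInvMatrix G with hJ
  set Dw := weightedDegMatrix G W with hDw
  set M := (1 : Matrix G.Dart G.Dart ℂ) - t • ((weightedArcMatrix G W)ᵀ - J) with hM
  set R := (1 : Matrix V V ℂ) - t • Wᵀ + t ^ 2 • (Dw - 1) with hR
  have hTJ : Tm * J = Sm := endMat_mul_arcInv G
  have hJ2 : J * J = 1 := arcInv_mul_arcInv G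
  have hTC : Tm * Cm = Wᵀ := endMat_mul_wStartMat G W hW
  have hSC : Sm * Cm = Dw := startMat_mul_wStartMat G W
  have hstep1 : M * ((1 : Matrix G.Dart G.Dart ℂ) - t • J) =
      a • (1 : Matrix G.Dart G.Dart ℂ) - Cm * (t • (Tm - t • Sm)) := by
    rw [hM, arcT_eq, ← hCm, ← hTm, ha]
    simp only [Matrix.mul_sub, Matrix.sub_mul, Matrix.smul_mul, Matrix.mul_smul, smul_sub,
      Matrix.one_mul, Matrix.mul_one, Matrix.mul_assoc, hTJ, hJ2]
    module
  have hdetJ : ((1 : Matrix G.Dart G.Dart ℂ) - t • J).det = a ^ mm :=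
    det_one_sub_smul_arcInv G t
  have hcard : Fintype.card G.Dart = 2 * mm := by
    rw [hmm]; exact SimpleGraph.dart_card_eq_twice_card_edges G
  have hkey : M.det * a ^ mm = a ^ (2 * mm) * ((a⁻¹) ^ nn * R.det) := by
    rw [← hdetJ, ← Matrix.det_mul, hstep1]
    have h2 : a • (1 : Matrix G.Dart G.Dart ℂ) - Cm * (t • (Tm - t • Sm)) =
        a • ((1 : Matrix G.Dart G.Dart ℂ) - Cm * (a⁻¹ • (t • (Tm - t • Sm)))) := by
      simp only [Matrix.mul_smul, Matrix.mul_sub, smul_sub, smul_smul]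
      match_scalars <;> field_simp
    rw [h2, Matrix.det_smul, hcard]
    congr 1
    have h3 : (1 : Matrix G.Dart G.Dart ℂ) - Cm * (a⁻¹ • (t • (Tm - t • Sm))) =
        1 - Cm * ((a⁻¹ • (t • (Tm - t • Sm)))) := rfl
    rw [h3, Matrix.det_one_sub_mul_comm]
    have h4 : (a⁻¹ • (t • (Tm - t • Sm))) * Cm = a⁻¹ • (t • ((Tm - t • Sm) * Cm)) := by
      rw [Matrix.smul_mul, Matrix.smul_mul]
    rw [h4, Matrix.sub_mul, Matrix.smul_mul, hTC, hSC]
    have h5 : (1 : Matrix V V ℂ) - a⁻¹ • (t • (Wᵀ - t • Dw)) =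
        a⁻¹ • (a • (1 : Matrix V V ℂ) - t • (Wᵀ - t • Dw)) := by
      simp only [smul_sub, smul_smul]
      match_scalars <;> field_simp
    rw [h5, Matrix.det_smul, hnn]
    congr 1
    rw [hR, ha]
    congr 1
    module
  apply mul_right_cancel₀ (pow_ne_zero mm ht)
  calc (a ^ nn * M.det) * a ^ mm = a ^ nn * (M.det * a ^ mm) := by ring
    _ = a ^ nn * (a ^ (2 * mm) * ((a⁻¹) ^ nn * R.det)) := by rw [hkey]
    _ = (a * a⁻¹) ^ nn * (a ^ (2 * mm) * R.det) := by rw [mul_pow]; ring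
    _ = a ^ (2 * mm) * R.det := by rw [mul_inv_cancel₀ ht, one_pow, one_mul]
    _ = (a ^ mm * R.det) * a ^ mm := by rw [two_mul, pow_add]; ring

end Core

lemma eval_det_aux {k : Type*} [Fintype k] [DecidableEq k] (A : Matrix k k (Polynomial ℂ))
    (s : ℂ) : Polynomial.eval s A.det = (A.map (Polynomial.evalRingHom s)).det :=
  RingHom.map_det (Polynomial.evalRingHom s) A

lemma map_one_sub_X_smul {k : Type*} [Fintype k] [DecidableEq k] (N : Matrix k k ℂ) (s : ℂ) :
    ((1 : Matrix k k (Polynomial ℂ)) - (Polynomial.X : Polynomial ℂ) • N.map Polynomial.C).map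
      (Polynomial.evalRingHom s) = (1 : Matrix k k ℂ) - s • N := by
  ext i j
  simp only [Matrix.map_apply, Matrix.sub_apply, Matrix.smul_apply, Matrix.one_apply,
    smul_eq_mul, Polynomial.coe_evalRingHom, Polynomial.eval_sub, Polynomial.eval_mul,
    Polynomial.eval_X, Polynomial.eval_C, Polynomial.eval_one, Polynomial.eval_zero,
    apply_ite (Polynomial.eval s)]

lemma map_one_sub_X_smul_add {k : Type*} [Fintype k] [DecidableEq k] (N N' : Matrix k k ℂ)
    (s : ℂ) :
    ((1 : Matrix k k (Polynomial ℂ)) - (Polynomial.X : Polynomial ℂ) • N.map Polynomial.C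
        + ((Polynomial.X : Polynomial ℂ) ^ 2) • N'.map Polynomial.C).map (Polynomial.evalRingHom s) =
      (1 : Matrix k k ℂ) - s • N + s ^ 2 • N' := by
  ext i j
  simp only [Matrix.map_apply, Matrix.sub_apply, Matrix.add_apply, Matrix.smul_apply,
    Matrix.one_apply, smul_eq_mul, Polynomial.coe_evalRingHom, Polynomial.eval_sub,
    Polynomial.eval_add, Polynomial.eval_mul, Polynomial.eval_pow, Polynomial.eval_X,
    Polynomial.eval_C, Polynomial.eval_one, Polynomial.eval_zero, apply_ite (Polynomial.eval s)]


/-- the transposed Bass-type determinant expression: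
det(I_{2m} − t(ᵀB_w − J₀)) = (1−t²)^{m−n}·det(I_n − tᵀW + t²(D_w − I_n))
(stated multiplied through by (1−t²)^n to avoid negative exponents). -/
theorem second_weighted_zeta_determinant_transpose [Fintype V] [DecidableEq V]
    (G : SimpleGraph V) [DecidableRel G.Adj] (hG : G.Connected) (n m : ℕ)
    (hn : n = Fintype.card V) (hm : m = G.edgeFinset.card) (W : Matrix V V ℂ)
    (hW : ∀ u v : V, ¬G.Adj u v → W u v = 0) :
    ∀ t : ℂ,
      (1 - t ^ 2) ^ n *
          ((1 : Matrix G.Dart G.Dart ℂ) -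
            t • ((weightedArcMatrix G W)ᵀ - arcInvMatrix G)).det =
        (1 - t ^ 2) ^ m *
          ((1 : Matrix V V ℂ) - t • Wᵀ + t ^ 2 • (weightedDegMatrix G W - 1)).det := by
  intro t
  classical
  subst hn hm
  set N1 := (weightedArcMatrix G W)ᵀ - arcInvMatrix G with hN1
  set Dm := weightedDegMatrix G W - 1 with hDm
  set P : Polynomial ℂ := (1 - Polynomial.X ^ 2) ^ (Fintype.card V) *
    ((1 : Matrix G.Dart G.Dart (Polynomial ℂ)) - (Polynomial.X : Polynomial ℂ) • N1.map Polynomial.C).det with hP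
  set Q : Polynomial ℂ := (1 - Polynomial.X ^ 2) ^ G.edgeFinset.card *
    ((1 : Matrix V V (Polynomial ℂ)) - (Polynomial.X : Polynomial ℂ) • Wᵀ.map Polynomial.C
      + ((Polynomial.X : Polynomial ℂ) ^ 2) • Dm.map Polynomial.C).det with hQ
  have hPe : ∀ s : ℂ, P.eval s =
      (1 - s ^ 2) ^ (Fintype.card V) * ((1 : Matrix G.Dart G.Dart ℂ) - s • N1).det := by
    intro s
    rw [hP, Polynomial.eval_mul, eval_det_aux, map_one_sub_X_smul]
    simp
  have hQe : ∀ s : ℂ, Q.eval s =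
      (1 - s ^ 2) ^ G.edgeFinset.card *
        ((1 : Matrix V V ℂ) - s • Wᵀ + s ^ 2 • Dm).det := by
    intro s
    rw [hQ, Polynomial.eval_mul, eval_det_aux, map_one_sub_X_smul_add]
    simp
  have hPQ : P = Q := by
    apply Polynomial.eq_of_infinite_eval_eq
    apply Set.Infinite.mono (s := {s : ℂ | 1 - s ^ 2 = 0}ᶜ)
    · intro s hs
      simp only [Set.mem_compl_iff, Set.mem_setOf_eq] at hs
      simp only [Set.mem_setOf_eq, hPe s, hQe s]
      exact core_identity G W hW s hs
    · apply Set.Finite.infinite_compl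
      apply Set.Finite.subset ((Set.finite_singleton (-1 : ℂ)).insert 1)
      intro s hs
      simp only [Set.mem_setOf_eq] at hs
      have h2 : (s - 1) * (s + 1) = 0 := by linear_combination -hs
      have h3 : s = 1 ∨ s = -1 := by
        rcases mul_eq_zero.mp h2 with h | h
        · left; linear_combination h
        · right; linear_combination h
      simpa using h3
  have := congrArg (Polynomial.eval t) hPQ
  rw [hPe t, hQe t] at this
  exact this
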